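/- Let X be a finite set with |X| = n, let S_1, …, S_m ⊆ X, and let t be an integer with 1 ≤ t ≤ m. Let G be the split graph on vertex set X ⊎ {1,…,m} in which any two distinct indices of {1,…,m} are adjacent, no two elements of X are adjacent, and x ∈ X is adjacent to j ∈ {1,…,m} if and only if x ∈ S_j. Color every vertex of X with color 1 and every vertex of {1,…,m} with color 2, and let M be the multiset containing color 1 with multiplicity n and color 2 with multiplicity t. Then there exists a set cover 𝒯 ⊆ {1,…,m} with |𝒯| ≤ t and ⋃_{j ∈ 𝒯} S_j = X if and only if (G, c, M) has a motif solution. -/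

import Mathlib

/-- A motif solution of an instance `(G, c, M)`: a set `R` of vertices such that the
induced subgraph `G[R]` is connected and the multiset of colors of `R` equals `M`. -/
def IsMotifSolution {V C : Type*} (G : SimpleGraph V) (c : V → C) (M : Multiset C)
    (R : Finset V) : Prop :=
  (G.induce (R : Set V)).Connected ∧ Multiset.map c R.val = M

lemma reach_adj_aux {V : Type*} {G : SimpleGraph V} {u v : V} (h : G.Reachable u v)
    (hne : u ≠ v) : ∃ w, G.Adj u w := by
  obtain ⟨p⟩ := h
  cases p with
  | nil => exact absurd rfl hne
  | cons h q => exact ⟨_, h⟩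

/-- Reduction from Set Cover: the split graph `G` has a clique on the
set-indices (color 2), an independent set on the elements `X` (color 1), and `x` adjacent
to `j` iff `x ∈ S_j`. With motif `M = {1^n, 2^t}` (`1 ≤ t ≤ m`, `n = |X|`), there is a
set cover of size at most `t` iff `(G, c, M)` has a motif solution. -/
theorem stmt_7 {X : Type*} [Fintype X] [DecidableEq X] (n m t : ℕ)
    (hn : Fintype.card X = n) (S : Fin m → Set X) (ht : 1 ≤ t) (htm : t ≤ m) :
    (∃ T : Finset (Fin m), T.card ≤ t ∧ ∀ x : X, ∃ j ∈ T, x ∈ S j) ↔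
    ∃ R : Finset (X ⊕ Fin m),
      IsMotifSolution
        (SimpleGraph.fromRel (fun a b =>
          (∃ j j' : Fin m, a = Sum.inr j ∧ b = Sum.inr j') ∨
          (∃ (x : X) (j : Fin m), a = Sum.inl x ∧ b = Sum.inr j ∧ x ∈ S j)))
        (Sum.elim (fun _ => (1 : ℕ)) (fun _ => (2 : ℕ)))
        (Multiset.replicate n 1 + Multiset.replicate t 2) R := by
  classical
  set rel : (X ⊕ Fin m) → (X ⊕ Fin m) → Prop := fun a b =>
      (∃ j j' : Fin m, a = Sum.inr j ∧ b = Sum.inr j') ∨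
      (∃ (x : X) (j : Fin m), a = Sum.inl x ∧ b = Sum.inr j ∧ x ∈ S j) with hrel
  set G := SimpleGraph.fromRel rel with hG
  set c : (X ⊕ Fin m) → ℕ := Sum.elim (fun _ => (1 : ℕ)) (fun _ => (2 : ℕ)) with hc
  -- adjacency facts
  have hadjrr : ∀ j j' : Fin m, j ≠ j' → G.Adj (Sum.inr j) (Sum.inr j') := by
    intro j j' hjj
    rw [hG, SimpleGraph.fromRel_adj]
    exact ⟨by simp [hjj], Or.inl (Or.inl ⟨j, j', rfl, rfl⟩)⟩
  have hadjlr : ∀ (x : X) (j : Fin m), x ∈ S j → G.Adj (Sum.inl x) (Sum.inr j) := by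
    intro x j hxj
    rw [hG, SimpleGraph.fromRel_adj]
    exact ⟨by simp, Or.inl (Or.inr ⟨x, j, rfl, rfl, hxj⟩)⟩
  have hadj_of : ∀ (x : X) (v : X ⊕ Fin m), G.Adj (Sum.inl x) v →
      ∃ j : Fin m, v = Sum.inr j ∧ x ∈ S j := by
    intro x v hv
    rw [hG, SimpleGraph.fromRel_adj] at hv
    rcases hv.2 with (⟨j, j', hj, hj'⟩ | ⟨x', j, hx', hv', hxj⟩) |
        (⟨j, j', hj, hj'⟩ | ⟨x', j, hx', hv', hxj⟩)
    · exact absurd hj (by simp)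
    · exact ⟨j, hv', by rcases Sum.inl_injective hx' with rfl; exact hxj⟩
    · exact absurd hj' (by simp)
    · exact absurd hv' (by simp)
  constructor
  · rintro ⟨T, hTcard, hTcov⟩
    obtain ⟨T', hTT', -, hT'card⟩ := Finset.exists_subsuperset_card_eq
      (Finset.subset_univ T) hTcard (by simpa using htm)
    have hdisj : Disjoint (Finset.univ.map ⟨Sum.inl, Sum.inl_injective⟩)
        (T'.map ⟨Sum.inr (α := X), Sum.inr_injective⟩) := by
      rw [Finset.disjoint_left]
      rintro a ha hb
      simp only [Finset.mem_map, Function.Embedding.coeFn_mk] at ha hb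
      obtain ⟨x, -, rfl⟩ := ha
      obtain ⟨j, -, hj⟩ := hb
      exact Sum.inl_ne_inr hj.symm
    refine ⟨(Finset.univ.map ⟨Sum.inl, Sum.inl_injective⟩).disjUnion
        (T'.map ⟨Sum.inr, Sum.inr_injective⟩) hdisj, ?_, ?_⟩
    · -- connectivity
      set R : Finset (X ⊕ Fin m) := (Finset.univ.map ⟨Sum.inl, Sum.inl_injective⟩).disjUnion
        (T'.map ⟨Sum.inr, Sum.inr_injective⟩) hdisj with hR
      have hinl : ∀ x : X, Sum.inl x ∈ R := by intro x; simp [hR]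
      have hinr : ∀ j : Fin m, j ∈ T' → Sum.inr j ∈ R := by
        intro j hj; simp [hR, hj]
      obtain ⟨j0, hj0⟩ : T'.Nonempty := by
        rw [← Finset.card_pos, hT'card]; exact ht
      have hub : (Sum.inr j0 : X ⊕ Fin m) ∈ (R : Set (X ⊕ Fin m)) := hinr j0 hj0
      have key : ∀ v : (R : Set (X ⊕ Fin m)),
          (G.induce (R : Set (X ⊕ Fin m))).Reachable v ⟨Sum.inr j0, hub⟩ := by
        rintro ⟨v, hv⟩
        have reach_r : ∀ (j : Fin m) (hj : Sum.inr j ∈ (R : Set (X ⊕ Fin m))),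
            (G.induce (R : Set (X ⊕ Fin m))).Reachable ⟨Sum.inr j, hj⟩ ⟨Sum.inr j0, hub⟩ := by
          intro j hj
          by_cases hjj : j = j0
          · subst hjj; exact SimpleGraph.Reachable.refl _
          · exact SimpleGraph.Adj.reachable (by
              simp only [SimpleGraph.comap_adj]
              exact hadjrr j j0 hjj)
        rcases v with x | j
        · obtain ⟨j, hjT, hxj⟩ := hTcov x
          have hjR : Sum.inr j ∈ (R : Set (X ⊕ Fin m)) := hinr j (hTT' hjT)
          have h1 : (G.induce (R : Set (X ⊕ Fin m))).Adj ⟨Sum.inl x, hv⟩ ⟨Sum.inr j, hjR⟩ := by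
            simp only [SimpleGraph.comap_adj]
            exact hadjlr x j hxj
          exact h1.reachable.trans (reach_r j hjR)
        · exact reach_r j hv
      have : Nonempty ((R : Set (X ⊕ Fin m)) : Type _) := ⟨⟨Sum.inr j0, hub⟩⟩
      exact SimpleGraph.Connected.mk (fun u v => (key u).trans (key v).symm)
    · -- multiset of colors
      have hval : ((Finset.univ.map ⟨Sum.inl, Sum.inl_injective⟩).disjUnion
          (T'.map ⟨Sum.inr, Sum.inr_injective⟩) hdisj).val =
          (Finset.univ.map (⟨Sum.inl, Sum.inl_injective⟩ : X ↪ X ⊕ Fin m)).val +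
          (T'.map (⟨Sum.inr, Sum.inr_injective⟩ : Fin m ↪ X ⊕ Fin m)).val := rfl
      rw [hval, Multiset.map_add, Finset.map_val, Finset.map_val,
        Multiset.map_map, Multiset.map_map]
      have h1 : (c ∘ (⟨Sum.inl, Sum.inl_injective⟩ : X ↪ X ⊕ Fin m)) = fun _ => (1 : ℕ) := rfl
      have h2 : (c ∘ (⟨Sum.inr, Sum.inr_injective⟩ : Fin m ↪ X ⊕ Fin m)) = fun _ => (2 : ℕ) := rfl
      rw [h1, h2, Multiset.map_const', Multiset.map_const']
      simp [hn, hT'card, Multiset.replicate]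
  · rintro ⟨R, hconn, hmult⟩
    -- counts
    have hcount1 : Multiset.card (R.val.filter (fun v => (1 : ℕ) = c v)) = n := by
      have := congrArg (Multiset.count 1) hmult
      rwa [Multiset.count_map, Multiset.count_add, Multiset.count_replicate,
        Multiset.count_replicate, if_pos rfl, if_neg (by norm_num), add_zero] at this
    have hcount2 : Multiset.card (R.val.filter (fun v => (2 : ℕ) = c v)) = t := by
      have := congrArg (Multiset.count 2) hmult
      rwa [Multiset.count_map, Multiset.count_add, Multiset.count_replicate,
        Multiset.count_replicate, if_neg (by norm_num), if_pos rfl, zero_add] at this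
    -- all of X is in R
    have hAcard : (Finset.univ.filter (fun x : X => Sum.inl x ∈ R)).card =
        (R.filter (fun v => (1 : ℕ) = c v)).card := by
      refine Finset.card_bij (fun x _ => Sum.inl x) ?_ ?_ ?_
      · intro x hx
        simp only [Finset.mem_filter, Finset.mem_univ, true_and] at hx ⊢
        exact ⟨hx, rfl⟩
      · intro a ha b hb hab
        exact Sum.inl_injective hab
      · rintro (x | j) hb
        · simp only [Finset.mem_filter] at hb
          exact ⟨x, by simp [hb.1], rfl⟩
        · simp only [Finset.mem_filter, hc] at hb
          exact absurd hb.2 (by norm_num)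
    have hcard1' : (R.filter (fun v => (1 : ℕ) = c v)).card = n := by
      rw [Finset.card_def, Finset.filter_val]; exact hcount1
    have hA : ∀ x : X, Sum.inl x ∈ R := by
      have huniv : (Finset.univ.filter (fun x : X => Sum.inl x ∈ R)) = Finset.univ :=
        Finset.eq_univ_of_card _ (by rw [hAcard, hcard1', hn])
      intro x
      have := Finset.mem_univ x
      rw [← huniv, Finset.mem_filter] at this
      exact this.2
    -- the candidate cover
    have hTcard : (Finset.univ.filter (fun j : Fin m => Sum.inr j ∈ R)).card =
        (R.filter (fun v => (2 : ℕ) = c v)).card := by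
      refine Finset.card_bij (fun j _ => Sum.inr j) ?_ ?_ ?_
      · intro j hj
        simp only [Finset.mem_filter, Finset.mem_univ, true_and] at hj ⊢
        exact ⟨hj, rfl⟩
      · intro a ha b hb hab
        exact Sum.inr_injective hab
      · rintro (x | j) hb
        · simp only [Finset.mem_filter, hc] at hb
          exact absurd hb.2 (by norm_num)
        · simp only [Finset.mem_filter] at hb
          exact ⟨j, by simp [hb.1], rfl⟩
    have hcard2' : (R.filter (fun v => (2 : ℕ) = c v)).card = t := by
      rw [Finset.card_def, Finset.filter_val]; exact hcount2
    refine ⟨Finset.univ.filter (fun j : Fin m => Sum.inr j ∈ R), by rw [hTcard, hcard2'], ?_⟩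
    intro x
    -- find some index vertex in R
    obtain ⟨v0, hv0R, hv0c⟩ : ∃ v ∈ R.val, (2 : ℕ) = c v := by
      have hpos : 0 < Multiset.card (R.val.filter (fun v => (2 : ℕ) = c v)) := by
        rw [hcount2]; exact ht
      obtain ⟨v, hv⟩ := Multiset.card_pos_iff_exists_mem.mp hpos
      rw [Multiset.mem_filter] at hv
      exact ⟨v, hv.1, hv.2⟩
    obtain ⟨j0, rfl⟩ : ∃ j0 : Fin m, v0 = Sum.inr j0 := by
      rcases v0 with x' | j0
      · exact absurd hv0c (by simp [hc])
      · exact ⟨j0, rfl⟩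
    have hxR : Sum.inl x ∈ (R : Set (X ⊕ Fin m)) := hA x
    have hj0R : Sum.inr j0 ∈ (R : Set (X ⊕ Fin m)) := hv0R
    have hreach := hconn.preconnected ⟨Sum.inl x, hxR⟩ ⟨Sum.inr j0, hj0R⟩
    have hne : (⟨Sum.inl x, hxR⟩ : (R : Set (X ⊕ Fin m))) ≠ ⟨Sum.inr j0, hj0R⟩ := by
      intro h
      exact Sum.inl_ne_inr (congrArg Subtype.val h)
    obtain ⟨w, hw⟩ := reach_adj_aux hreach hne
    have hadj : G.Adj (Sum.inl x) w.1 := by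
      simpa only [SimpleGraph.comap_adj, Function.Embedding.subtype_apply] using hw
    obtain ⟨j, hwj, hxj⟩ := hadj_of x w.1 hadj
    have hjR : Sum.inr j ∈ R := by
      have := w.2
      rwa [hwj] at this
    exact ⟨j, by simp [hjR], hxj⟩
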